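/- In BiSample-MD, for a population of n users where each user i with ε_u^i ≥ ε holds v_i ∈ [−1,1] and otherwise holds ⊥, the expected conditional frequencies satisfy: f_POS + f_NEG = (2p−1)·(1 − f_⊥) + 2(1−p) in expectation, where f_⊥ is the fraction of ⊥ users and p = e^ε/(e^ε+1). Consequently f_⊥* = (1 − f_POS − f_NEG)/(2p−1) is an unbiased estimator of f_⊥. -/

import Mathlib

open Real Finset

/-- Expected probability of reporting `b = 1` given direction `s` for a user
holding `t ∈ [−1,1] ∪ {⊥}` under BiSample-MD. -/
noncomputable def gMD (ε : ℝ) (s : Bool) (t : Option ℝ) : ℝ :=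
  match t with
  | some v => if s then (exp ε - 1) / (exp ε + 1) * (v / 2) + 1 / 2
              else (1 - exp ε) / (1 + exp ε) * (v / 2) + 1 / 2
  | none => 1 / (exp ε + 1)

/-- For BiSample-MD with `p = e^ε/(e^ε+1)`, the expected conditional
frequencies satisfy `f_POS + f_NEG = (2p−1)(1−f_⊥) + 2(1−p)`, so
`f_⊥* = (1 − f_POS − f_NEG)/(2p−1)` is an unbiased estimator of `f_⊥`. -/
theorem biSampleMD_missing_rate_unbiased (ε : ℝ) (hε : 0 < ε)
    (n : ℕ) (hn : 0 < n) (hold : Fin n → Option ℝ)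
    (hval : ∀ i, ∀ v ∈ hold i, v ∈ Set.Icc (-1 : ℝ) 1)
    (p fPOS fNEG fBot : ℝ)
    (hp : p = exp ε / (exp ε + 1))
    (hPOS : fPOS = (∑ i, gMD ε true (hold i)) / n)
    (hNEG : fNEG = (∑ i, gMD ε false (hold i)) / n)
    (hBot : fBot = ((univ.filter fun i => hold i = none).card : ℝ) / n) :
    fPOS + fNEG = (2 * p - 1) * (1 - fBot) + 2 * (1 - p) ∧
    (1 - fPOS - fNEG) / (2 * p - 1) = fBot := by
  have hE1 : (1:ℝ) < exp ε := by
    have := Real.exp_lt_exp.mpr hε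
    simpa using this
  have hEpos : (0:ℝ) < exp ε := exp_pos ε
  have hE0 : exp ε + 1 ≠ 0 := by positivity
  have hE0' : (1:ℝ) + exp ε ≠ 0 := by positivity
  have hn0 : (n:ℝ) ≠ 0 := Nat.cast_ne_zero.mpr hn.ne'
  have hkey : ∀ t : Option ℝ, gMD ε true t + gMD ε false t
      = if t = none then 2 / (exp ε + 1) else 1 := by
    intro t
    cases t with
    | none => simp [gMD]; ring
    | some v =>
      simp only [gMD, if_true, Bool.false_eq_true, if_false, Option.some_ne_none, if_neg]
      field_simp
      ring
  have hsum : (∑ i, gMD ε true (hold i)) + (∑ i, gMD ε false (hold i))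
      = ((univ.filter fun i => hold i = none).card : ℝ) * (2 / (exp ε + 1))
        + ((univ.filter fun i => ¬ hold i = none).card : ℝ) := by
    rw [← Finset.sum_add_distrib]
    simp only [hkey]
    rw [Finset.sum_ite, Finset.sum_const, Finset.sum_const]
    push_cast
    ring
  have hcard : ((univ.filter fun i => ¬ hold i = none).card : ℝ)
      = n - ((univ.filter fun i => hold i = none).card : ℝ) := by
    have := Finset.card_filter_add_card_filter_not
      (s := (univ : Finset (Fin n))) (p := fun i => hold i = none)
    have h2 : (univ.filter fun i => hold i = none).card
        + (univ.filter fun i => ¬ hold i = none).card = n := by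
      simpa using this
    have := congrArg (fun k : ℕ => (k : ℝ)) h2
    push_cast at this
    linarith
  set k : ℝ := ((univ.filter fun i => hold i = none).card : ℝ) with hk
  have hfirst : fPOS + fNEG = (2 * p - 1) * (1 - fBot) + 2 * (1 - p) := by
    rw [hPOS, hNEG, ← add_div, hsum, hcard, hp, hBot]
    field_simp
    ring
  refine ⟨hfirst, ?_⟩
  have hne : 2 * p - 1 ≠ 0 := by
    rw [hp]
    have : exp ε / (exp ε + 1) > 1 / 2 := by
      rw [gt_iff_lt, div_lt_div_iff₀ (by norm_num) (by positivity)]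
      linarith
    intro h
    have : p = 1 / 2 := by rw [hp]; linarith [hp ▸ h]
    rw [hp] at this
    nlinarith [this]
  rw [show 1 - fPOS - fNEG = 1 - (fPOS + fNEG) by ring, hfirst]
  field_simp
  ring
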